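/- Let C be a symmetric monoidal category with finite biproducts such that the tensor product preserves finite biproducts in each variable, and let n be a natural number. Then the n-fold biproduct 1^{⊕ n} of copies of the monoidal unit carries a commutative separable monoid object structure, where the multiplication 1^{⊕ n} ⊗ 1^{⊕ n} → 1^{⊕ n} is induced (via the distributivity isomorphism 1^{⊕ n} ⊗ 1^{⊕ n} ≅ (1 ⊗ 1)^{⊕ n²} ≅ 1^{⊕ n²}) by projecting onto the diagonal components, the unit 1 → 1^{⊕ n} is the diagonal morphism, and the separability section 1^{⊕ n} → 1^{⊕ n} ⊗ 1^{⊕ n} is the inclusion of the diagonal components. -/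

import Mathlib

open CategoryTheory CategoryTheory.Limits CategoryTheory.MonoidalCategory

universe v u


section UnitBiproductHelpers

variable {C : Type u} [Category.{v} C] [MonoidalCategory C] [HasZeroMorphisms C]

private lemma my_zero_whiskerRight (X : C) [(tensorRight X).PreservesZeroMorphisms] {A B : C} :
    (0 : A ⟶ B) ▷ X = 0 := by
  simpa using (tensorRight X).map_zero A B

private lemma my_whiskerLeft_zero (X : C) [(tensorLeft X).PreservesZeroMorphisms] {A B : C} :
    X ◁ (0 : A ⟶ B) = 0 := by
  simpa using (tensorLeft X).map_zero A B

private lemma my_zero_tensorHom {A B X Y : C} (g : X ⟶ Y)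
    [(tensorRight X).PreservesZeroMorphisms] :
    (0 : A ⟶ B) ⊗ₘ g = 0 := by
  rw [MonoidalCategory.tensorHom_def, my_zero_whiskerRight, zero_comp]

private lemma my_tensorHom_zero {A B X Y : C} [(tensorLeft B).PreservesZeroMorphisms]
    (f : A ⟶ B) : f ⊗ₘ (0 : X ⟶ Y) = 0 := by
  rw [MonoidalCategory.tensorHom_def, my_whiskerLeft_zero, comp_zero]

private lemma my_extR {J : Type} [Fintype J] (f : J → C) [HasBiproduct f] (X : C)
    [(tensorRight X).PreservesZeroMorphisms] [PreservesBiproduct f (tensorRight X)]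
    {Y : C} {g h : (⨁ f) ⊗ X ⟶ Y}
    (w : ∀ j, (biproduct.ι f j ▷ X) ≫ g = (biproduct.ι f j ▷ X) ≫ h) : g = h := by
  apply (isBilimitOfPreserves (tensorRight X) (biproduct.isBilimit f)).isColimit.hom_ext
  rintro ⟨j⟩
  simp; exact w j

private lemma my_extL {J : Type} [Fintype J] (f : J → C) [HasBiproduct f] (X : C)
    [(tensorLeft X).PreservesZeroMorphisms] [PreservesBiproduct f (tensorLeft X)]
    {Y : C} {g h : X ⊗ (⨁ f) ⟶ Y}
    (w : ∀ j, (X ◁ biproduct.ι f j) ≫ g = (X ◁ biproduct.ι f j) ≫ h) : g = h := by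
  apply (isBilimitOfPreserves (tensorLeft X) (biproduct.isBilimit f)).isColimit.hom_ext
  rintro ⟨j⟩
  simp; exact w j

private lemma my_extR' {J : Type} [Fintype J] (f : J → C) [HasBiproduct f] (X : C)
    [(tensorRight X).PreservesZeroMorphisms] [PreservesBiproduct f (tensorRight X)]
    {Y : C} {g h : Y ⟶ (⨁ f) ⊗ X}
    (w : ∀ j, g ≫ (biproduct.π f j ▷ X) = h ≫ (biproduct.π f j ▷ X)) : g = h := by
  apply (isBilimitOfPreserves (tensorRight X) (biproduct.isBilimit f)).isLimit.hom_ext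
  rintro ⟨j⟩
  simp; exact w j

private lemma my_extL' {J : Type} [Fintype J] (f : J → C) [HasBiproduct f] (X : C)
    [(tensorLeft X).PreservesZeroMorphisms] [PreservesBiproduct f (tensorLeft X)]
    {Y : C} {g h : Y ⟶ X ⊗ (⨁ f)}
    (w : ∀ j, g ≫ (X ◁ biproduct.π f j) = h ≫ (X ◁ biproduct.π f j)) : g = h := by
  apply (isBilimitOfPreserves (tensorLeft X) (biproduct.isBilimit f)).isLimit.hom_ext
  rintro ⟨j⟩
  simp; exact w j

end UnitBiproductHelpers

set_option maxHeartbeats 1600000 in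
/-- In a symmetric monoidal category with finite biproducts, in which the tensor
product preserves finite biproducts in each variable, the `n`-fold biproduct
`1^{⊕ n}` of copies of the monoidal unit is a commutative separable monoid
object: the multiplication `1^{⊕ n} ⊗ₘ 1^{⊕ n} ⟶ 1^{⊕ n}` is given (via the
distributivity isomorphism) by projecting onto the diagonal components, i.e. its
`j`-th component is `π_j ⊗ₘ π_j` followed by the unitor; the unit `1 ⟶ 1^{⊕ n}`
is the diagonal morphism; and the separability section
`1^{⊕ n} ⟶ 1^{⊕ n} ⊗ₘ 1^{⊕ n}` is the inclusion of the diagonal components,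
i.e. its `j`-th component is the inverse unitor followed by `ι_j ⊗ₘ ι_j`. -/
theorem unit_biproduct_commutative_separable_monoid
    {C : Type u} [Category.{v} C] [MonoidalCategory C] [SymmetricCategory C]
    [HasZeroMorphisms C] [HasFiniteBiproducts C]
    [∀ X : C, (tensorLeft X).PreservesZeroMorphisms]
    [∀ X : C, (tensorRight X).PreservesZeroMorphisms]
    [∀ X : C, PreservesFiniteBiproducts (tensorLeft X)]
    [∀ X : C, PreservesFiniteBiproducts (tensorRight X)]
    (n : ℕ) :
    ∀ (eta : 𝟙_ C ⟶ ⨁ fun _ : Fin n => 𝟙_ C)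
      (mu : (⨁ fun _ : Fin n => 𝟙_ C) ⊗ (⨁ fun _ : Fin n => 𝟙_ C) ⟶ ⨁ fun _ : Fin n => 𝟙_ C)
      (sig : (⨁ fun _ : Fin n => 𝟙_ C) ⟶ (⨁ fun _ : Fin n => 𝟙_ C) ⊗ ⨁ fun _ : Fin n => 𝟙_ C),
      -- the unit is the diagonal morphism:
      eta = biproduct.lift (fun _ => 𝟙 (𝟙_ C)) →
      -- the multiplication projects onto the diagonal components:
      mu = biproduct.lift (fun j =>
        (biproduct.π (fun _ : Fin n => 𝟙_ C) j ⊗ₘ biproduct.π (fun _ : Fin n => 𝟙_ C) j) ≫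
          (λ_ (𝟙_ C)).hom) →
      -- the section is the inclusion of the diagonal components:
      sig = biproduct.desc (fun j =>
        (λ_ (𝟙_ C)).inv ≫
          (biproduct.ι (fun _ : Fin n => 𝟙_ C) j ⊗ₘ biproduct.ι (fun _ : Fin n => 𝟙_ C) j)) →
      -- monoid object axioms:
      ((eta ▷ _) ≫ mu = (λ_ (⨁ fun _ : Fin n => 𝟙_ C)).hom ∧
       (_ ◁ eta) ≫ mu = (ρ_ (⨁ fun _ : Fin n => 𝟙_ C)).hom ∧
       (mu ▷ _) ≫ mu = (α_ _ _ _).hom ≫ (_ ◁ mu) ≫ mu) ∧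
      -- commutativity:
      (β_ (⨁ fun _ : Fin n => 𝟙_ C) (⨁ fun _ : Fin n => 𝟙_ C)).hom ≫ mu = mu ∧
      -- separability: `sig` is a bilinear section of `mu`:
      (sig ≫ mu = 𝟙 (⨁ fun _ : Fin n => 𝟙_ C) ∧
       (sig ▷ _) ≫ (α_ _ _ _).hom ≫ (_ ◁ mu) = mu ≫ sig ∧
       mu ≫ sig = (_ ◁ sig) ≫ (α_ _ _ _).inv ≫ (mu ▷ _)) := by
  intro eta mu sig he hm hs
  subst he; subst hm; subst hs
  set B : C := ⨁ (fun _ : Fin n => 𝟙_ C) with hB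
  set μ : B ⊗ B ⟶ B := biproduct.lift (fun j =>
      (biproduct.π (fun _ : Fin n => 𝟙_ C) j ⊗ₘ biproduct.π (fun _ : Fin n => 𝟙_ C) j) ≫ (λ_ (𝟙_ C)).hom) with hμdef
  set σ : B ⟶ B ⊗ B := biproduct.desc (fun j =>
      (λ_ (𝟙_ C)).inv ≫ (biproduct.ι (fun _ : Fin n => 𝟙_ C) j ⊗ₘ biproduct.ι (fun _ : Fin n => 𝟙_ C) j)) with hσdef
  set η : 𝟙_ C ⟶ B := biproduct.lift (fun _ => 𝟙 (𝟙_ C)) with hηdef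
  -- component formulas
  have hμπ : ∀ k, μ ≫ biproduct.π (fun _ : Fin n => 𝟙_ C) k
      = (biproduct.π (fun _ : Fin n => 𝟙_ C) k ⊗ₘ biproduct.π (fun _ : Fin n => 𝟙_ C) k) ≫ (λ_ (𝟙_ C)).hom := by
    intro k; rw [hμdef, biproduct.lift_π]
  have hισ : ∀ k, biproduct.ι (fun _ : Fin n => 𝟙_ C) k ≫ σ
      = (λ_ (𝟙_ C)).inv ≫ (biproduct.ι (fun _ : Fin n => 𝟙_ C) k ⊗ₘ biproduct.ι (fun _ : Fin n => 𝟙_ C) k) := by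
    intro k; rw [hσdef, biproduct.ι_desc]
  have hημ : ∀ k, η ≫ biproduct.π (fun _ : Fin n => 𝟙_ C) k = 𝟙 (𝟙_ C) := by
    intro k; rw [hηdef, biproduct.lift_π]
  have hμc : ∀ i j, (biproduct.ι (fun _ : Fin n => 𝟙_ C) i ⊗ₘ biproduct.ι (fun _ : Fin n => 𝟙_ C) j) ≫ μ
      = if i = j then (λ_ (𝟙_ C)).hom ≫ biproduct.ι (fun _ : Fin n => 𝟙_ C) i else 0 := by
    intro i j
    apply biproduct.hom_ext
    intro k
    rw [Category.assoc, hμπ, tensorHom_comp_tensorHom_assoc]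
    by_cases hik : i = k
    · subst hik
      rw [biproduct.ι_π_self]
      by_cases hij : i = j
      · subst hij
        simp [biproduct.ι_π_self]
      · rw [biproduct.ι_π_ne _ (Ne.symm hij), my_tensorHom_zero, zero_comp,
          if_neg hij, zero_comp]
    · rw [biproduct.ι_π_ne _ hik, my_zero_tensorHom, zero_comp]
      split_ifs with hij
      · subst hij
        rw [Category.assoc, biproduct.ι_π_ne _ hik, comp_zero]
      · rw [zero_comp]
  have hσc : ∀ i j, σ ≫ (biproduct.π (fun _ : Fin n => 𝟙_ C) i ⊗ₘ biproduct.π (fun _ : Fin n => 𝟙_ C) j)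
      = if i = j then biproduct.π (fun _ : Fin n => 𝟙_ C) i ≫ (λ_ (𝟙_ C)).inv else 0 := by
    intro i j
    apply biproduct.hom_ext'
    intro k
    rw [hσdef, biproduct.ι_desc_assoc, Category.assoc, tensorHom_comp_tensorHom]
    by_cases hki : i = k
    · subst hki
      rw [biproduct.ι_π_self]
      by_cases hij : i = j
      · subst hij
        simp [biproduct.ι_π_self]
      · rw [biproduct.ι_π_ne _ hij, my_tensorHom_zero, comp_zero,
          if_neg hij, comp_zero]
    · rw [biproduct.ι_π_ne _ (Ne.symm hki), my_zero_tensorHom, comp_zero]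
      split_ifs with hij
      · subst hij
        rw [← Category.assoc, biproduct.ι_π_ne _ (Ne.symm hki), zero_comp]
      · rw [comp_zero]
  -- extensionality into B ⊗ B
  have ext2 : ∀ {Y : C} (g h : Y ⟶ B ⊗ B),
      (∀ i j, g ≫ (biproduct.π (fun _ : Fin n => 𝟙_ C) i ⊗ₘ biproduct.π (fun _ : Fin n => 𝟙_ C) j)
            = h ≫ (biproduct.π (fun _ : Fin n => 𝟙_ C) i ⊗ₘ biproduct.π (fun _ : Fin n => 𝟙_ C) j)) → g = h := by
    intro Y g h w
    apply my_extR' (fun _ : Fin n => 𝟙_ C) B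
    intro i
    apply my_extL' (fun _ : Fin n => 𝟙_ C) (𝟙_ C)
    intro j
    rw [Category.assoc, Category.assoc, ← MonoidalCategory.tensorHom_def]
    exact w i j
  refine ⟨⟨?_, ?_, ?_⟩, ?_, ?_, ?_, ?_⟩
  · -- left unit law
    apply biproduct.hom_ext
    intro k
    rw [Category.assoc, hμπ, ← tensorHom_id, tensorHom_comp_tensorHom_assoc, hημ,
      Category.id_comp, id_tensorHom, leftUnitor_naturality]
  · -- right unit law
    apply biproduct.hom_ext
    intro k
    rw [Category.assoc, hμπ, ← id_tensorHom, tensorHom_comp_tensorHom_assoc, hημ,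
      Category.id_comp, tensorHom_id, unitors_equal, rightUnitor_naturality]
  · -- associativity
    apply biproduct.hom_ext
    intro k
    have coh : ((λ_ (𝟙_ C)).hom ⊗ₘ 𝟙 (𝟙_ C)) ≫ (λ_ (𝟙_ C)).hom
        = (α_ (𝟙_ C) (𝟙_ C) (𝟙_ C)).hom ≫ (𝟙 (𝟙_ C) ⊗ₘ (λ_ (𝟙_ C)).hom) ≫
            (λ_ (𝟙_ C)).hom := by
      coherence
    have e1 : (μ ▷ B) ≫ (biproduct.π (fun _ : Fin n => 𝟙_ C) k ⊗ₘ biproduct.π (fun _ : Fin n => 𝟙_ C) k)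
        = ((biproduct.π (fun _ : Fin n => 𝟙_ C) k ⊗ₘ biproduct.π (fun _ : Fin n => 𝟙_ C) k) ⊗ₘ biproduct.π (fun _ : Fin n => 𝟙_ C) k) ≫
            ((λ_ (𝟙_ C)).hom ⊗ₘ 𝟙 (𝟙_ C)) := by
      rw [← tensorHom_id, tensorHom_comp_tensorHom, tensorHom_comp_tensorHom, hμπ,
        Category.id_comp, Category.comp_id]
    have e2 : (B ◁ μ) ≫ (biproduct.π (fun _ : Fin n => 𝟙_ C) k ⊗ₘ biproduct.π (fun _ : Fin n => 𝟙_ C) k)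
        = (biproduct.π (fun _ : Fin n => 𝟙_ C) k ⊗ₘ (biproduct.π (fun _ : Fin n => 𝟙_ C) k ⊗ₘ biproduct.π (fun _ : Fin n => 𝟙_ C) k)) ≫
            (𝟙 (𝟙_ C) ⊗ₘ (λ_ (𝟙_ C)).hom) := by
      rw [← id_tensorHom, tensorHom_comp_tensorHom, tensorHom_comp_tensorHom, hμπ,
        Category.id_comp, Category.comp_id]
    calc ((μ ▷ B) ≫ μ) ≫ biproduct.π (fun _ : Fin n => 𝟙_ C) k
        = ((biproduct.π (fun _ : Fin n => 𝟙_ C) k ⊗ₘ biproduct.π (fun _ : Fin n => 𝟙_ C) k) ⊗ₘ biproduct.π (fun _ : Fin n => 𝟙_ C) k) ≫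
            ((λ_ (𝟙_ C)).hom ⊗ₘ 𝟙 (𝟙_ C)) ≫ (λ_ (𝟙_ C)).hom := by
          rw [Category.assoc, hμπ, reassoc_of% e1]
      _ = ((biproduct.π (fun _ : Fin n => 𝟙_ C) k ⊗ₘ biproduct.π (fun _ : Fin n => 𝟙_ C) k) ⊗ₘ biproduct.π (fun _ : Fin n => 𝟙_ C) k) ≫
            (α_ (𝟙_ C) (𝟙_ C) (𝟙_ C)).hom ≫ (𝟙 (𝟙_ C) ⊗ₘ (λ_ (𝟙_ C)).hom) ≫
            (λ_ (𝟙_ C)).hom := by rw [coh]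
      _ = ((α_ B B B).hom ≫ (B ◁ μ) ≫ μ) ≫ biproduct.π (fun _ : Fin n => 𝟙_ C) k := by
          simp only [Category.assoc]
          rw [hμπ, reassoc_of% e2, ← associator_naturality_assoc]
  · -- commutativity
    apply biproduct.hom_ext
    intro k
    show ((β_ B B).hom ≫ μ) ≫ biproduct.π (fun _ : Fin n => 𝟙_ C) k = μ ≫ biproduct.π (fun _ : Fin n => 𝟙_ C) k
    simp only [Category.assoc]
    rw [hμπ, ← BraidedCategory.braiding_naturality_assoc,
      braiding_tensorUnit_left]
    simp [unitors_equal]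
  · -- section
    apply biproduct.hom_ext'
    intro k
    show biproduct.ι (fun _ : Fin n => 𝟙_ C) k ≫ σ ≫ μ = biproduct.ι (fun _ : Fin n => 𝟙_ C) k ≫ 𝟙 B
    rw [reassoc_of% (hισ k), hμc, if_pos rfl, Iso.inv_hom_id_assoc,
      Category.comp_id]
  · -- bilinearity 1
    apply ext2
    intro i j
    have hR : (μ ≫ σ) ≫ (biproduct.π (fun _ : Fin n => 𝟙_ C) i ⊗ₘ biproduct.π (fun _ : Fin n => 𝟙_ C) j)
        = if i = j then biproduct.π (fun _ : Fin n => 𝟙_ C) i ⊗ₘ biproduct.π (fun _ : Fin n => 𝟙_ C) i else 0 := by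
      rw [Category.assoc, hσc]
      split_ifs with hij
      · subst hij
        rw [← Category.assoc, hμπ, Category.assoc, Iso.hom_inv_id,
          Category.comp_id]
      · rw [comp_zero]
    have step1 : (B ◁ μ) ≫ (biproduct.π (fun _ : Fin n => 𝟙_ C) i ⊗ₘ biproduct.π (fun _ : Fin n => 𝟙_ C) j)
        = (biproduct.π (fun _ : Fin n => 𝟙_ C) i ⊗ₘ (biproduct.π (fun _ : Fin n => 𝟙_ C) j ⊗ₘ biproduct.π (fun _ : Fin n => 𝟙_ C) j)) ≫
            (𝟙 (𝟙_ C) ⊗ₘ (λ_ (𝟙_ C)).hom) := by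
      rw [← id_tensorHom, tensorHom_comp_tensorHom, tensorHom_comp_tensorHom, hμπ,
        Category.id_comp, Category.comp_id]
    have step2 : (σ ▷ B) ≫ ((biproduct.π (fun _ : Fin n => 𝟙_ C) i ⊗ₘ biproduct.π (fun _ : Fin n => 𝟙_ C) j) ⊗ₘ biproduct.π (fun _ : Fin n => 𝟙_ C) j)
        = (if i = j then biproduct.π (fun _ : Fin n => 𝟙_ C) i ≫ (λ_ (𝟙_ C)).inv else 0) ⊗ₘ
            biproduct.π (fun _ : Fin n => 𝟙_ C) j := by
      rw [← tensorHom_id, tensorHom_comp_tensorHom, hσc, Category.id_comp]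
    simp only [Category.assoc]
    rw [hσc, step1, ← associator_naturality_assoc, ← Category.assoc, step2]
    split_ifs with hij
    · subst hij
      have coh : ((λ_ (𝟙_ C)).inv ⊗ₘ 𝟙 (𝟙_ C)) ≫ (α_ (𝟙_ C) (𝟙_ C) (𝟙_ C)).hom ≫
          (𝟙 (𝟙_ C) ⊗ₘ (λ_ (𝟙_ C)).hom) = 𝟙 _ := by coherence
      rw [show ((biproduct.π (fun _ : Fin n => 𝟙_ C) i ≫ (λ_ (𝟙_ C)).inv) ⊗ₘ biproduct.π (fun _ : Fin n => 𝟙_ C) i)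
          = (biproduct.π (fun _ : Fin n => 𝟙_ C) i ⊗ₘ biproduct.π (fun _ : Fin n => 𝟙_ C) i) ≫ ((λ_ (𝟙_ C)).inv ⊗ₘ 𝟙 (𝟙_ C)) by
            rw [tensorHom_comp_tensorHom, Category.comp_id],
        Category.assoc, coh, Category.comp_id,
        reassoc_of% (hμπ i), Iso.hom_inv_id, Category.comp_id]
    · rw [my_zero_tensorHom, zero_comp, comp_zero]
  · -- bilinearity 2
    apply ext2
    intro i j
    have hL : (μ ≫ σ) ≫ (biproduct.π (fun _ : Fin n => 𝟙_ C) i ⊗ₘ biproduct.π (fun _ : Fin n => 𝟙_ C) j)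
        = if i = j then biproduct.π (fun _ : Fin n => 𝟙_ C) i ⊗ₘ biproduct.π (fun _ : Fin n => 𝟙_ C) i else 0 := by
      rw [Category.assoc, hσc]
      split_ifs with hij
      · subst hij
        rw [← Category.assoc, hμπ, Category.assoc, Iso.hom_inv_id,
          Category.comp_id]
      · rw [comp_zero]
    have step1 : (μ ▷ B) ≫ (biproduct.π (fun _ : Fin n => 𝟙_ C) i ⊗ₘ biproduct.π (fun _ : Fin n => 𝟙_ C) j)
        = ((biproduct.π (fun _ : Fin n => 𝟙_ C) i ⊗ₘ biproduct.π (fun _ : Fin n => 𝟙_ C) i) ⊗ₘ biproduct.π (fun _ : Fin n => 𝟙_ C) j) ≫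
            ((λ_ (𝟙_ C)).hom ⊗ₘ 𝟙 (𝟙_ C)) := by
      rw [← tensorHom_id, tensorHom_comp_tensorHom, tensorHom_comp_tensorHom, hμπ,
        Category.id_comp, Category.comp_id]
    have step2 : (B ◁ σ) ≫ (biproduct.π (fun _ : Fin n => 𝟙_ C) i ⊗ₘ (biproduct.π (fun _ : Fin n => 𝟙_ C) i ⊗ₘ biproduct.π (fun _ : Fin n => 𝟙_ C) j))
        = biproduct.π (fun _ : Fin n => 𝟙_ C) i ⊗ₘ
            (if i = j then biproduct.π (fun _ : Fin n => 𝟙_ C) i ≫ (λ_ (𝟙_ C)).inv else 0) := by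
      rw [← id_tensorHom, tensorHom_comp_tensorHom, hσc, Category.id_comp]
    simp only [Category.assoc]
    rw [hσc, step1, ← associator_inv_naturality_assoc, ← Category.assoc, step2]
    split_ifs with hij
    · subst hij
      have coh : (𝟙 (𝟙_ C) ⊗ₘ (λ_ (𝟙_ C)).inv) ≫ (α_ (𝟙_ C) (𝟙_ C) (𝟙_ C)).inv ≫
          ((λ_ (𝟙_ C)).hom ⊗ₘ 𝟙 (𝟙_ C)) = 𝟙 _ := by coherence
      rw [show (biproduct.π (fun _ : Fin n => 𝟙_ C) i ⊗ₘ (biproduct.π (fun _ : Fin n => 𝟙_ C) i ≫ (λ_ (𝟙_ C)).inv))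
          = (biproduct.π (fun _ : Fin n => 𝟙_ C) i ⊗ₘ biproduct.π (fun _ : Fin n => 𝟙_ C) i) ≫ (𝟙 (𝟙_ C) ⊗ₘ (λ_ (𝟙_ C)).inv) by
            rw [tensorHom_comp_tensorHom, Category.comp_id],
        Category.assoc, coh, Category.comp_id,
        reassoc_of% (hμπ i), Iso.hom_inv_id, Category.comp_id]
    · rw [my_tensorHom_zero, zero_comp, comp_zero]
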